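/- The order-preserving hypothesis in the SSTAP optimality theorem cannot be dropped: there exist n = 3 jobs arriving in order x₁, x₂, x₃, workers p₁, p₂, p₃, a threshold α = 0.1, and a function f that is not order-preserving in its second argument — concretely, f(x₁,p₁)=0.5, f(x₁,p₂)=0.4, f(x₁,p₃)=0.7, f(x₂,p₁)=0.08, f(x₂,p₂)=0.1, f(x₂,p₃)=0.03, f(x₃,p₁)=0.5, f(x₃,p₂)=0.4, f(x₃,p₃)=0.1 — such that every run of the greedy policy achieves reward exactly 2 (it assigns x₁ to p₂, rejects x₂, and assigns x₃ to p₃), while the assignment x₁ ↦ p₁, x₂ ↦ p₂, x₃ ↦ p₃ achieves the maximum reward 3. -/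

import Mathlib

/-!
STATEMENT 9 (the counterexample showing the order-preserving hypothesis cannot be
dropped): there are 3 jobs, 3 workers, threshold `α = 0.1` and a function `f` that is
not order-preserving in its second argument, taking the concrete values of the paper,
such that every run of the greedy policy assigns `x₁ ↦ p₂`, rejects `x₂`, assigns
`x₃ ↦ p₃` and achieves reward exactly `2`, while the assignment `xᵢ ↦ pᵢ` achieves
the maximum possible reward `3`.
-/

open Finset

/-- A partial assignment of jobs to workers is injective: no worker serves two jobs. -/
def PartialInjective {n : ℕ} (A : Fin n → Option (Fin n)) : Prop :=
  ∀ i i' j, A i = some j → A i' = some j → i = i'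

/-- The SSTAP reward of an assignment: the number of jobs assigned to a worker meeting
the threshold. -/
noncomputable def sstapReward {n : ℕ} (x p : Fin n → ℝ) (f : ℝ → ℝ → ℝ) (α : ℝ)
    (A : Fin n → Option (Fin n)) : ℕ :=
  (Finset.univ.filter (fun i => ∃ j, A i = some j ∧ α ≤ f (x i) (p j))).card

/-- Worker `j` is still available when job `i` arrives (no earlier job got it). -/
def AvailableAt {n : ℕ} (A : Fin n → Option (Fin n)) (i j : Fin n) : Prop :=
  ∀ i' : Fin n, i' < i → A i' ≠ some j

/-- `A` is a run of the greedy policy: every assigned job gets an available worker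
meeting the threshold that minimizes `f (x i) (p ·)` among the available workers
meeting the threshold, and a job is rejected only when no available worker meets the
threshold. -/
def IsGreedyRun {n : ℕ} (x p : Fin n → ℝ) (f : ℝ → ℝ → ℝ) (α : ℝ)
    (A : Fin n → Option (Fin n)) : Prop :=
  ∀ i : Fin n,
    (∀ j, A i = some j →
      AvailableAt A i j ∧ α ≤ f (x i) (p j) ∧
        ∀ j', AvailableAt A i j' → α ≤ f (x i) (p j') → f (x i) (p j) ≤ f (x i) (p j')) ∧
    (A i = none → ∀ j, AvailableAt A i j → f (x i) (p j) < α)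


/-- Jobs of the counterexample. -/
def xvC : Fin 3 → ℝ := ![0, 1, 2]

/-- Workers of the counterexample. -/
def pvC : Fin 3 → ℝ := ![3, 4, 5]

/-- The non-order-preserving function of the counterexample. -/
noncomputable def fvC : ℝ → ℝ → ℝ := fun a b =>
  if a = 0 then (if b = 3 then 0.5 else if b = 4 then 0.4 else 0.7)
  else if a = 1 then (if b = 3 then 0.08 else if b = 4 then 0.1 else 0.03)
  else (if b = 3 then 0.5 else if b = 4 then 0.4 else 0.1)

theorem greedy_suboptimal_without_order_preservation :
    ∃ (x p : Fin 3 → ℝ) (f : ℝ → ℝ → ℝ),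
      -- the concrete values of the example:
      (f (x 0) (p 0) = 0.5 ∧ f (x 0) (p 1) = 0.4 ∧ f (x 0) (p 2) = 0.7 ∧
       f (x 1) (p 0) = 0.08 ∧ f (x 1) (p 1) = 0.1 ∧ f (x 1) (p 2) = 0.03 ∧
       f (x 2) (p 0) = 0.5 ∧ f (x 2) (p 1) = 0.4 ∧ f (x 2) (p 2) = 0.1) ∧
      -- `f` is not order-preserving in its second argument:
      ¬ (∀ j j' : Fin 3, (∀ i, f (x i) (p j) ≤ f (x i) (p j')) ∨
          (∀ i, f (x i) (p j') ≤ f (x i) (p j))) ∧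
      -- every run of the greedy policy assigns `x₁ ↦ p₂`, rejects `x₂`, assigns
      -- `x₃ ↦ p₃`, and achieves reward exactly `2`:
      (∀ A : Fin 3 → Option (Fin 3), IsGreedyRun x p f 0.1 A →
        A 0 = some 1 ∧ A 1 = none ∧ A 2 = some 2 ∧ sstapReward x p f 0.1 A = 2) ∧
      -- while the assignment `x₁ ↦ p₁, x₂ ↦ p₂, x₃ ↦ p₃` achieves reward `3` ...
      (PartialInjective (fun i : Fin 3 => (some i : Option (Fin 3))) ∧
        sstapReward x p f 0.1 (fun i : Fin 3 => (some i : Option (Fin 3))) = 3) ∧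
      -- ... which is the maximum reward over all assignments:
      (∀ B : Fin 3 → Option (Fin 3), PartialInjective B →
        sstapReward x p f 0.1 B ≤ 3) := by

  classical
  refine ⟨xvC, pvC, fvC, ?_, ?_, ?_, ?_, ?_⟩
  · refine ⟨?_, ?_, ?_, ?_, ?_, ?_, ?_, ?_, ?_⟩ <;> norm_num [fvC, xvC, pvC, Matrix.cons_val_two]
  · intro h
    rcases h 0 2 with h' | h'
    · have := h' 1; norm_num [fvC, xvC, pvC, Matrix.cons_val_two] at this
    · have := h' 0; norm_num [fvC, xvC, pvC, Matrix.cons_val_two] at this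
  · intro A hA
    have avail0 : ∀ j, AvailableAt A 0 j := by
      intro j i' hi'
      exact absurd hi' (by simp [Fin.lt_def])
    have hA0 : A 0 = some 1 := by
      rcases h : A 0 with _ | j
      · have := (hA 0).2 h 1 (avail0 1)
        norm_num [fvC, xvC, pvC] at this
      · obtain ⟨-, hthr, hmin⟩ := (hA 0).1 j h
        fin_cases j
        · have := hmin 1 (avail0 1) (by norm_num [fvC, xvC, pvC])
          norm_num [fvC, xvC, pvC] at this
        · rfl
        · have := hmin 1 (avail0 1) (by norm_num [fvC, xvC, pvC])
          norm_num [fvC, xvC, pvC] at this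
    have hA1 : A 1 = none := by
      rcases h : A 1 with _ | j
      · rfl
      · obtain ⟨havj, hthr, -⟩ := (hA 1).1 j h
        fin_cases j
        · norm_num [fvC, xvC, pvC] at hthr
        · exact absurd (havj 0 (by simp [Fin.lt_def])) (by simp [hA0])
        · norm_num [fvC, xvC, pvC] at hthr
    have avail2 : ∀ j : Fin 3, j ≠ 1 → AvailableAt A 2 j := by
      intro j hj i' hi'
      have h01 : i' = 0 ∨ i' = 1 := by
        rcases i' with ⟨v, hv⟩
        simp [Fin.lt_def] at hi'
        interval_cases v
        · exact Or.inl rfl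
        · exact Or.inr rfl
      rcases h01 with h' | h' <;> subst h'
      · rw [hA0]
        intro h''
        exact hj (Option.some.injEq .. ▸ h'').symm
      · rw [hA1]; simp
    have hA2 : A 2 = some 2 := by
      rcases h : A 2 with _ | j
      · have := (hA 2).2 h 2 (avail2 2 (by decide))
        norm_num [fvC, xvC, pvC, Matrix.cons_val_two] at this
      · obtain ⟨havj, hthr, hmin⟩ := (hA 2).1 j h
        fin_cases j
        · have := hmin 2 (avail2 2 (by decide)) (by norm_num [fvC, xvC, pvC, Matrix.cons_val_two])
          norm_num [fvC, xvC, pvC, Matrix.cons_val_two] at this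
        · exact absurd (havj 0 (by simp [Fin.lt_def])) (by simp [hA0])
        · rfl
    refine ⟨hA0, hA1, hA2, ?_⟩
    have hfil : (Finset.univ.filter
        (fun i => ∃ j, A i = some j ∧ (0.1 : ℝ) ≤ fvC (xvC i) (pvC j))) = {0, 2} := by
      ext i
      fin_cases i
      · simp only [Finset.mem_filter, Finset.mem_univ, true_and, hA0,
          Finset.mem_insert, Finset.mem_singleton]
        constructor
        · intro _; left; rfl
        · intro _
          exact ⟨1, hA0, by norm_num [fvC, xvC, pvC]⟩
      · simp [hA1]
      · simp only [Finset.mem_filter, Finset.mem_univ, true_and, hA2,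
          Finset.mem_insert, Finset.mem_singleton]
        constructor
        · intro _; right; rfl
        · intro _
          exact ⟨2, hA2, by norm_num [fvC, xvC, pvC, Matrix.cons_val_two]⟩
    rw [sstapReward, hfil]
    decide
  · constructor
    · intro i i' j h h'
      simp only [Option.some.injEq] at h h'
      rw [h, h']
    · rw [sstapReward]
      have huniv : (Finset.univ.filter (fun i : Fin 3 =>
          ∃ j, (some i : Option (Fin 3)) = some j ∧ (0.1 : ℝ) ≤ fvC (xvC i) (pvC j)))
          = Finset.univ := by
        ext i
        simp only [Finset.mem_filter, Finset.mem_univ, true_and, iff_true]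
        fin_cases i
        · exact ⟨0, rfl, by norm_num [fvC, xvC, pvC]⟩
        · exact ⟨1, rfl, by norm_num [fvC, xvC, pvC]⟩
        · exact ⟨2, rfl, by norm_num [fvC, xvC, pvC, Matrix.cons_val_two]⟩
      rw [huniv]
      decide
  · intro B _
    calc sstapReward _ _ _ _ B ≤ (Finset.univ : Finset (Fin 3)).card :=
          Finset.card_filter_le _ _
      _ = 3 := by decide
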